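/- Let c, e : [0,∞) → ℝ be bounded continuous functions with c(t) > 0 and e(t) ≥ 0 for all t ≥ 0, set D(t) = e(t) − c(t) and Φ(t,s) = exp(∫_s^t D(τ) dτ), and let p : [0,∞) → ℝ be a differentiable solution of the time-varying Levins model p'(t) = c(t)·p(t)·(1 − p(t)) − e(t)·p(t) with p(0) ∈ (0,1]. If the upper Bohl exponent satisfies β⁺(D) < 0, then there exist constants K ≥ 1 and α > 0 such that | 1/p(t) − ∫_0^t Φ(t,s)·c(s) ds | ≤ (K/p(0))·exp(−α·t) for all t ≥ 0; that is, 1/p(t) equals ∫_0^t Φ(t,s)·c(s) ds up to an error converging exponentially to zero. -/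

import Mathlib

open Filter Set

/-- Transition operator of the scalar linear equation `x' = D t * x`. -/
noncomputable def Phi (D : ℝ → ℝ) (t s : ℝ) : ℝ :=
  Real.exp (∫ τ in s..t, D τ)

/-- Average of `D` over the interval from `q.1` to `q.2`. -/
noncomputable def bohlAvg (D : ℝ → ℝ) (q : ℝ × ℝ) : ℝ :=
  (q.2 - q.1)⁻¹ * ∫ τ in q.1..q.2, D τ

/-- The filter describing `t - s → +∞` with `t > s ≥ 0` for pairs `q = (s, t)`. -/
def bohlFilter : Filter (ℝ × ℝ) :=
  (Filter.atTop.comap fun q : ℝ × ℝ => q.2 - q.1) ⊓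
    Filter.principal {q : ℝ × ℝ | 0 ≤ q.1 ∧ q.1 < q.2}

/-- Upper Bohl exponent of `D`. -/
noncomputable def bohlUpper (D : ℝ → ℝ) : ℝ :=
  Filter.limsup (bohlAvg D) bohlFilter

/-- Lower Bohl exponent of `D`. -/
noncomputable def bohlLower (D : ℝ → ℝ) : ℝ :=
  Filter.liminf (bohlAvg D) bohlFilter

lemma constOn_of_deriv_zero (g : ℝ → ℝ) (h : ∀ x, 0 ≤ x → HasDerivAt g 0 x) :
    ∀ t, 0 ≤ t → g t = g 0 := by
  intro t ht
  have H := constant_of_has_deriv_right_zero (f := g) (a := 0) (b := t)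
    (fun x hx => (h x hx.1).continuousAt.continuousWithinAt)
    (fun x hx => (h x hx.1).hasDerivWithinAt)
  exact H t ⟨ht, le_rfl⟩

/-- Persistence scenario: if `β⁺(e - c) < 0` then `1 / p t` equals
`∫_0^t Φ(t,s) c(s) ds` up to an exponentially decaying error. -/
theorem levins_persistence_asymptotic_formula (c e : ℝ → ℝ)
    (hc_cont : ContinuousOn c (Set.Ici 0)) (he_cont : ContinuousOn e (Set.Ici 0))
    (hc_bdd : ∃ M, ∀ t, 0 ≤ t → |c t| ≤ M) (he_bdd : ∃ M, ∀ t, 0 ≤ t → |e t| ≤ M)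
    (hc_pos : ∀ t, 0 ≤ t → 0 < c t) (he_nonneg : ∀ t, 0 ≤ t → 0 ≤ e t)
    (D : ℝ → ℝ) (hD : ∀ t, D t = e t - c t)
    (p : ℝ → ℝ)
    (hp : ∀ t, 0 ≤ t → HasDerivAt p (c t * p t * (1 - p t) - e t * p t) t)
    (hp0 : p 0 ∈ Set.Ioc (0 : ℝ) 1)
    (hB : bohlUpper D < 0) :
    ∃ K α : ℝ, 1 ≤ K ∧ 0 < α ∧
      ∀ t, 0 ≤ t →
        |1 / p t - ∫ s in (0 : ℝ)..t, Phi D t s * c s| ≤ (K / p 0) * Real.exp (-α * t) := by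
  obtain ⟨hp0_pos, _hp0_le⟩ := hp0
  obtain ⟨Mc, hMc⟩ := hc_bdd
  obtain ⟨Me, hMe⟩ := he_bdd
  -- continuous extensions of c, e, p to all of ℝ
  have hmax : Continuous fun t : ℝ => max t 0 := continuous_id.max continuous_const
  have hmem : ∀ x : ℝ, max x 0 ∈ Set.Ici (0:ℝ) := fun x => Set.mem_Ici.2 (le_max_right _ _)
  set c' : ℝ → ℝ := fun t => c (max t 0) with hc'def
  set e' : ℝ → ℝ := fun t => e (max t 0) with he'def
  have hc'c : Continuous c' := hc_cont.comp_continuous hmax hmem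
  have he'c : Continuous e' := he_cont.comp_continuous hmax hmem
  have hc'eq : ∀ t, 0 ≤ t → c' t = c t := fun t ht => by
    simp only [hc'def, max_eq_left ht]
  have he'eq : ∀ t, 0 ≤ t → e' t = e t := fun t ht => by
    simp only [he'def, max_eq_left ht]
  have hpc : ContinuousOn p (Set.Ici 0) := fun t ht =>
    (hp t ht).continuousAt.continuousWithinAt
  set q : ℝ → ℝ := fun t => p (max t 0) with hqdef
  have hqc : Continuous q := hpc.comp_continuous hmax hmem
  have hqeq : ∀ t, 0 ≤ t → q t = p t := fun t ht => by
    simp only [hqdef, max_eq_left ht]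
  -- positivity of p on [0, ∞)
  set f : ℝ → ℝ := fun s => c' s * (1 - q s) - e' s with hfdef
  have hfc : Continuous f := (hc'c.mul (continuous_const.sub hqc)).sub he'c
  set F : ℝ → ℝ := fun t => ∫ s in (0:ℝ)..t, f s with hFdef
  have hF : ∀ t, HasDerivAt F (f t) t := fun t =>
    (hfc.integral_hasStrictDerivAt 0 t).hasDerivAt
  have hF0 : F 0 = 0 := by simp [hFdef]
  have hgconst : ∀ t, 0 ≤ t →
      p t * Real.exp (-F t) = p 0 * Real.exp (-F 0) := by
    apply constOn_of_deriv_zero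
    intro x hx
    have h1 : HasDerivAt (fun t => Real.exp (-F t)) (-f x * Real.exp (-F x)) x := by
      have := ((hF x).neg).exp
      refine this.congr_deriv ?_
      simp only [Pi.neg_apply]
      ring
    have h2 := (hp x hx).mul h1
    refine h2.congr_deriv ?_
    simp only [hfdef, hqeq x hx, hc'eq x hx, he'eq x hx]
    ring
  have hppos : ∀ t, 0 ≤ t → 0 < p t := by
    intro t ht
    have h := hgconst t ht
    have hE : (0:ℝ) < Real.exp (-F t) := Real.exp_pos _
    have hC : (0:ℝ) < p 0 * Real.exp (-F 0) := by positivity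
    nlinarith
  -- the reciprocal u = 1/p solves the linear equation u' = D u + c
  have hu : ∀ t, 0 ≤ t → HasDerivAt (fun s => (p s)⁻¹)
      ((e t - c t) * (p t)⁻¹ + c t) t := by
    intro t ht
    have hne : p t ≠ 0 := (hppos t ht).ne'
    have h := (hp t ht).inv hne
    refine h.congr_deriv ?_
    field_simp
    ring
  set Dt : ℝ → ℝ := fun s => e' s - c' s with hDtdef
  have hDtc : Continuous Dt := he'c.sub hc'c
  set G : ℝ → ℝ := fun t => ∫ s in (0:ℝ)..t, Dt s with hGdef
  have hG : ∀ t, HasDerivAt G (Dt t) t := fun t =>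
    (hDtc.integral_hasStrictDerivAt 0 t).hasDerivAt
  have hGc : Continuous G := continuous_iff_continuousAt.2 fun t => (hG t).continuousAt
  have hG0 : G 0 = 0 := by simp [hGdef]
  have hh2c : Continuous fun s => Real.exp (-G s) * c' s :=
    (Real.continuous_exp.comp hGc.neg).mul hc'c
  -- the function w is constant on [0, ∞)
  have hw : ∀ t, 0 ≤ t →
      Real.exp (-G t) * (p t)⁻¹ - (∫ s in (0:ℝ)..t, Real.exp (-G s) * c' s)
        = Real.exp (-G 0) * (p 0)⁻¹ - (∫ s in (0:ℝ)..(0:ℝ), Real.exp (-G s) * c' s) := by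
    apply constOn_of_deriv_zero
      (fun t => Real.exp (-G t) * (p t)⁻¹ - ∫ s in (0:ℝ)..t, Real.exp (-G s) * c' s)
    intro x hx
    have d1 : HasDerivAt (fun t => Real.exp (-G t)) (-Dt x * Real.exp (-G x)) x := by
      have := ((hG x).neg).exp
      refine this.congr_deriv ?_
      simp only [Pi.neg_apply]
      ring
    have d2 := d1.mul (hu x hx)
    have d3 : HasDerivAt (fun t => ∫ s in (0:ℝ)..t, Real.exp (-G s) * c' s)
        (Real.exp (-G x) * c' x) x := (hh2c.integral_hasStrictDerivAt 0 x).hasDerivAt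
    have d4 := d2.sub d3
    refine d4.congr_deriv ?_
    simp only [hDtdef, hc'eq x hx, he'eq x hx]
    ring
  have hw0 : Real.exp (-G 0) * (p 0)⁻¹ - (∫ s in (0:ℝ)..(0:ℝ), Real.exp (-G s) * c' s)
      = (p 0)⁻¹ := by
    simp [hG0]
  -- identification of D with Dt on [0, ∞)
  have hDeq : ∀ τ, 0 ≤ τ → Dt τ = D τ := fun τ hτ => by
    rw [hD, hDtdef]
    simp only [hc'eq τ hτ, he'eq τ hτ]
  have hGeq : ∀ t, 0 ≤ t → G t = ∫ s in (0:ℝ)..t, D s := by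
    intro t ht
    apply intervalIntegral.integral_congr
    intro s hs
    rw [Set.uIcc_of_le ht] at hs
    exact hDeq s hs.1
  -- the key exact formula
  have key : ∀ t, 0 ≤ t →
      1 / p t - (∫ s in (0:ℝ)..t, Phi D t s * c s) = Real.exp (G t) * (p 0)⁻¹ := by
    intro t ht
    have hint : (∫ s in (0:ℝ)..t, Phi D t s * c s)
        = Real.exp (G t) * ∫ s in (0:ℝ)..t, Real.exp (-G s) * c' s := by
      rw [← intervalIntegral.integral_const_mul]
      apply intervalIntegral.integral_congr
      intro s hs
      rw [Set.uIcc_of_le ht] at hs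
      have hs0 : 0 ≤ s := hs.1
      have hst : s ≤ t := hs.2
      have hsub : (∫ τ in s..t, D τ) = G t - G s := by
        have h1 : (∫ τ in s..t, D τ) = ∫ τ in s..t, Dt τ := by
          apply intervalIntegral.integral_congr
          intro τ hτ
          rw [Set.uIcc_of_le hst] at hτ
          exact (hDeq τ (hs0.trans hτ.1)).symm
        rw [h1]
        have h2 := (intervalIntegral.integral_interval_sub_left
          (hDtc.intervalIntegrable (μ := MeasureTheory.volume) 0 t)
          (hDtc.intervalIntegrable (μ := MeasureTheory.volume) 0 s)).symm
        simpa only [hGdef] using h2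
      simp only [Phi, hsub, hc'eq s hs0]
      rw [Real.exp_sub, Real.exp_neg]
      field_simp
    have hwt := (hw t ht).trans hw0
    have hexp : Real.exp (-G t) * Real.exp (G t) = 1 := by
      rw [← Real.exp_add]; simp
    rw [one_div, hint]
    set I := ∫ s in (0:ℝ)..t, Real.exp (-G s) * c' s
    have h3 : Real.exp (G t) * (Real.exp (-G t) * (p t)⁻¹ - I)
        = Real.exp (G t) * (p 0)⁻¹ := by rw [hwt]
    linear_combination h3 - (p t)⁻¹ * hexp
  -- the Bohl exponent bound
  set al : ℝ := -(bohlUpper D) / 2 with haldef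
  have hal : 0 < al := by rw [haldef]; linarith
  have hlim : Filter.limsup (bohlAvg D) bohlFilter < -al := by
    have : bohlUpper D < -al := by rw [haldef]; linarith
    exact this
  set M0 : ℝ := max (Mc + Me) 0 with hM0def
  have hM0nn : 0 ≤ M0 := le_max_right _ _
  have hDbd : ∀ τ, 0 ≤ τ → |D τ| ≤ M0 := by
    intro τ hτ
    rw [hD]
    have h1 : |e τ - c τ| ≤ |e τ| + |c τ| := abs_sub _ _
    have := hMc τ hτ
    have := hMe τ hτ
    have := le_max_left (Mc + Me) (0:ℝ)
    linarith
  have hbdd : Filter.IsBoundedUnder (· ≤ ·) bohlFilter (bohlAvg D) := by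
    refine ⟨M0, ?_⟩
    rw [Filter.eventually_map]
    simp only [bohlFilter, Filter.eventually_inf_principal]
    apply Filter.Eventually.of_forall
    rintro ⟨s, t⟩ ⟨hs0, hst⟩
    simp only [bohlAvg]
    have hI : ‖∫ τ in s..t, D τ‖ ≤ M0 * |t - s| := by
      apply intervalIntegral.norm_integral_le_of_norm_le_const
      intro x hx
      rw [Set.uIoc_of_le hst.le] at hx
      rw [Real.norm_eq_abs]
      exact hDbd x (hs0.trans hx.1.le)
    rw [Real.norm_eq_abs, abs_of_pos (sub_pos.2 hst)] at hI
    have hinv : (0:ℝ) ≤ (t - s)⁻¹ := inv_nonneg.2 (sub_pos.2 hst).le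
    have h1 : (t - s)⁻¹ * (∫ τ in s..t, D τ) ≤ (t - s)⁻¹ * (M0 * (t - s)) :=
      mul_le_mul_of_nonneg_left ((le_abs_self _).trans hI) hinv
    have hne : t - s ≠ 0 := (sub_pos.2 hst).ne'
    have h2 : (t - s)⁻¹ * (M0 * (t - s)) = M0 := by
      field_simp
    linarith
  have hev := Filter.eventually_lt_of_limsup_lt hlim hbdd
  simp only [bohlFilter, Filter.eventually_inf_principal, Filter.eventually_comap,
    Filter.eventually_atTop] at hev
  obtain ⟨T, hT⟩ := hev
  set T' : ℝ := max T 1 with hT'def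
  have hT'1 : (1:ℝ) ≤ T' := le_max_right _ _
  have hKnn : 0 ≤ (M0 + al) * T' := by
    apply mul_nonneg (by linarith) (by linarith)
  refine ⟨Real.exp ((M0 + al) * T'), al, Real.one_le_exp hKnn, hal, ?_⟩
  intro t ht
  rw [key t ht]
  have habs : |Real.exp (G t) * (p 0)⁻¹| = Real.exp (G t) * (p 0)⁻¹ := by
    apply abs_of_pos
    positivity
  rw [habs]
  have hgoal : Real.exp (G t) ≤ Real.exp ((M0 + al) * T') * Real.exp (-al * t) := by
    rw [← Real.exp_add]
    apply Real.exp_le_exp.2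
    rcases le_or_gt t T' with hcase | hcase
    · have hGbd : G t ≤ M0 * t := by
        have hI : ‖∫ s in (0:ℝ)..t, Dt s‖ ≤ M0 * |t - 0| := by
          apply intervalIntegral.norm_integral_le_of_norm_le_const
          intro x hx
          rw [Set.uIoc_of_le ht] at hx
          rw [Real.norm_eq_abs, hDeq x hx.1.le]
          exact hDbd x hx.1.le
        rw [Real.norm_eq_abs, sub_zero, abs_of_nonneg ht] at hI
        calc G t ≤ |G t| := le_abs_self _
          _ ≤ M0 * t := hI
      nlinarith
    · have ht1 : (1:ℝ) ≤ t := le_trans hT'1 hcase.le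
      have htT : T ≤ t := le_trans (le_max_left T 1) hcase.le
      have htpos : (0:ℝ) < t := by linarith
      have hq := hT t htT (0, t) (by simp) ⟨le_rfl, htpos⟩
      simp only [bohlAvg, sub_zero] at hq
      have h5 : t * (t⁻¹ * ∫ τ in (0:ℝ)..t, D τ) < t * (-al) :=
        mul_lt_mul_of_pos_left hq htpos
      have h6 : t * (t⁻¹ * ∫ τ in (0:ℝ)..t, D τ) = ∫ τ in (0:ℝ)..t, D τ := by
        field_simp
      rw [hGeq t ht]
      nlinarith
  calc Real.exp (G t) * (p 0)⁻¹
      ≤ (Real.exp ((M0 + al) * T') * Real.exp (-al * t)) * (p 0)⁻¹ :=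
        mul_le_mul_of_nonneg_right hgoal (inv_nonneg.2 hp0_pos.le)
    _ = (Real.exp ((M0 + al) * T') / p 0) * Real.exp (-al * t) := by
        rw [div_eq_mul_inv]; ring
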